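/- arXiv:1202.2471 — 2 statements merged into one kernel-verified Lean document; each statement's English description precedes it below -/
import Mathlib

section
/- For 0 < p ≤ 1, λ > 0 and μ ≥ 0, there is a constant C (depending only on λ, μ, p) such that for all t ≥ 0, ∫₀ᵗ e^{-λ(t^p - s^p)} (1+s)^{-μ} ds ≤ C (1+t)^{1-p} (1+t)^{-μ}. -/
open Real MeasureTheory

/-- Polynomial growth is dominated by a stretched exponential. -/
lemma poly_le_exp_aux (p c a : ℝ) (hp : 0 < p) (hc : 0 < c) (ha : 0 ≤ a) :
    ∃ C : ℝ, 0 < C ∧ ∀ t : ℝ, 0 ≤ t → (1 + t) ^ a ≤ C * Real.exp (c * t ^ p) := by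
  obtain ⟨n, hn⟩ : ∃ n : ℕ, a / p ≤ n := exists_nat_ge (a / p)
  have hnp : a ≤ n * p := by rw [div_le_iff₀ hp] at hn; linarith
  refine ⟨2 ^ a * (1 + n.factorial / c ^ n), by positivity, fun t ht => ?_⟩
  have htp : (0:ℝ) ≤ t ^ p := Real.rpow_nonneg ht p
  have hexp1 : (1:ℝ) ≤ Real.exp (c * t ^ p) := Real.one_le_exp (by positivity)
  have hexp0 : (0:ℝ) < Real.exp (c * t ^ p) := Real.exp_pos _
  have h2a : (0:ℝ) < 2 ^ a := Real.rpow_pos_of_pos two_pos a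
  rcases le_total t 1 with h1 | h1
  · have : (1 + t) ^ a ≤ 2 ^ a :=
      Real.rpow_le_rpow (by linarith) (by linarith) ha
    calc (1 + t) ^ a ≤ 2 ^ a := this
      _ = 2 ^ a * 1 * 1 := by ring
      _ ≤ 2 ^ a * (1 + n.factorial / c ^ n) * Real.exp (c * t ^ p) := by
          apply mul_le_mul _ hexp1 zero_le_one (by positivity)
          have : (0:ℝ) ≤ (n.factorial : ℝ) / c ^ n := by positivity
          nlinarith
  · have ht0 : (0:ℝ) < t := lt_of_lt_of_le one_pos h1
    have key : (c * t ^ p) ^ n / n.factorial ≤ Real.exp (c * t ^ p) :=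
      Real.pow_div_factorial_le_exp _ (by positivity) n
    have htpn : (t ^ p) ^ n ≤ (n.factorial : ℝ) / c ^ n * Real.exp (c * t ^ p) := by
      have hfac : (0:ℝ) < (n.factorial : ℝ) := by positivity
      rw [mul_pow] at key
      rw [div_le_iff₀ hfac] at key
      rw [div_mul_eq_mul_div, le_div_iff₀ (by positivity)]
      nlinarith [pow_pos hc n]
    have h1t : (1 + t) ^ a ≤ (2 * t) ^ a :=
      Real.rpow_le_rpow (by linarith) (by linarith) ha
    have h2t : (2 * t) ^ a = 2 ^ a * t ^ a := Real.mul_rpow (by norm_num) ht0.le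
    have hta : t ^ a ≤ t ^ ((n : ℝ) * p) :=
      Real.rpow_le_rpow_of_exponent_le h1 hnp
    have htnp : t ^ ((n : ℝ) * p) = (t ^ p) ^ n := by
      rw [mul_comm, Real.rpow_mul ht0.le, Real.rpow_natCast]
    calc (1 + t) ^ a ≤ 2 ^ a * t ^ a := by rw [← h2t]; exact h1t
      _ ≤ 2 ^ a * ((n.factorial : ℝ) / c ^ n * Real.exp (c * t ^ p)) := by
          apply mul_le_mul_of_nonneg_left _ h2a.le
          calc t ^ a ≤ t ^ ((n : ℝ) * p) := hta
            _ = (t ^ p) ^ n := htnp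
            _ ≤ _ := htpn
      _ ≤ 2 ^ a * (1 + n.factorial / c ^ n) * Real.exp (c * t ^ p) := by
          rw [mul_assoc]
          apply mul_le_mul_of_nonneg_left _ h2a.le
          apply mul_le_mul_of_nonneg_right _ hexp0.le
          simp

theorem basic_decay (p lam mu : ℝ) (hp : 0 < p) (hp1 : p ≤ 1) (hlam : 0 < lam)
    (hmu : 0 ≤ mu) :
    ∃ C : ℝ, 0 < C ∧ ∀ t : ℝ, 0 ≤ t →
      (∫ s in (0:ℝ)..t, Real.exp (-lam * (t ^ p - s ^ p)) * (1 + s) ^ (-mu))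
        ≤ C * (1 + t) ^ (1 - p) * (1 + t) ^ (-mu) := by
  -- the stretched-exponential constant
  set c : ℝ := lam * (1 - 2 ^ (-p)) with hc_def
  have h2p : (2:ℝ) ^ (-p) < 1 := Real.rpow_lt_one_of_one_lt_of_neg one_lt_two (by linarith)
  have h2p0 : (0:ℝ) < 2 ^ (-p) := Real.rpow_pos_of_pos two_pos _
  have hc : 0 < c := by
    apply mul_pos hlam; linarith
  obtain ⟨C1, hC1, hC1t⟩ := poly_le_exp_aux p c (mu + 1) hp hc (by linarith)
  have h2mu : (0:ℝ) < 2 ^ mu := Real.rpow_pos_of_pos two_pos mu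
  refine ⟨C1 + 2 ^ mu / (lam * p), by positivity, fun t ht => ?_⟩
  rcases eq_or_lt_of_le ht with rfl | ht0
  · simp [intervalIntegral.integral_same]
    positivity
  -- now 0 < t
  have h1t : (0:ℝ) < 1 + t := by linarith
  have h1tp : (0:ℝ) < (1 + t) ^ (1 - p) := Real.rpow_pos_of_pos h1t _
  have h1tm : (0:ℝ) < (1 + t) ^ (-mu) := Real.rpow_pos_of_pos h1t _
  have h1tp1 : (1:ℝ) ≤ (1 + t) ^ (1 - p) := Real.one_le_rpow (by linarith) (by linarith)
  set f : ℝ → ℝ := fun s => Real.exp (-lam * (t ^ p - s ^ p)) * (1 + s) ^ (-mu) with hf_def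
  -- continuity / integrability of f on subintervals of [0, ∞)
  have hcont1 : Continuous fun s : ℝ => Real.exp (-lam * (t ^ p - s ^ p)) :=
    Real.continuous_exp.comp
      (continuous_const.mul (continuous_const.sub (Real.continuous_rpow_const hp.le)))
  have hfc : ∀ a b : ℝ, 0 ≤ a → a ≤ b → IntervalIntegrable f volume a b := by
    intro a b ha hab
    apply ContinuousOn.intervalIntegrable
    rw [Set.uIcc_of_le hab]
    exact hcont1.continuousOn.mul
      (ContinuousOn.rpow_const (continuous_const.add continuous_id).continuousOn
        (fun x hx => Or.inl (by have := le_trans ha hx.1; linarith)))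
  have ht2 : 0 ≤ t / 2 := by linarith
  have ht2t : t / 2 ≤ t := by linarith
  have ht2pos : 0 < t / 2 := by linarith
  -- split the integral
  have hsplit : (∫ s in (0:ℝ)..t, f s)
      = (∫ s in (0:ℝ)..t / 2, f s) + ∫ s in (t / 2)..t, f s :=
    (intervalIntegral.integral_add_adjacent_intervals (hfc 0 (t / 2) le_rfl ht2)
      (hfc (t / 2) t ht2 ht2t)).symm
  -- ### Part 1 : the integral over [0, t/2]
  have htp0 : (0:ℝ) ≤ t ^ p := Real.rpow_nonneg ht p
  have part1 : (∫ s in (0:ℝ)..t / 2, f s) ≤ C1 * (1 + t) ^ (-mu) := by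
    have hbound : ∀ s ∈ Set.Icc (0:ℝ) (t / 2), f s ≤ Real.exp (-(c * t ^ p)) := by
      intro s hs
      obtain ⟨hs0, hs2'⟩ := hs
      have h1 : (1 + s) ^ (-mu) ≤ 1 :=
        Real.rpow_le_one_of_one_le_of_nonpos (by linarith) (by linarith)
      have h2 : Real.exp (-lam * (t ^ p - s ^ p)) ≤ Real.exp (-(c * t ^ p)) := by
        apply Real.exp_le_exp.2
        have hsp : s ^ p ≤ (t / 2) ^ p := Real.rpow_le_rpow hs0 hs2' hp.le
        have htdiv : (t / 2) ^ p = t ^ p * 2 ^ (-p) := by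
          rw [div_eq_mul_inv, Real.mul_rpow ht (by norm_num), Real.rpow_neg (by norm_num : (0:ℝ) ≤ 2),
            ← Real.inv_rpow (by norm_num : (0:ℝ) ≤ 2)]
        rw [htdiv] at hsp
        rw [hc_def]
        nlinarith
      calc f s ≤ Real.exp (-lam * (t ^ p - s ^ p)) * 1 := by
            apply mul_le_mul_of_nonneg_left h1 (Real.exp_pos _).le
        _ = Real.exp (-lam * (t ^ p - s ^ p)) := mul_one _
        _ ≤ Real.exp (-(c * t ^ p)) := h2
    have hmono : (∫ s in (0:ℝ)..t / 2, f s)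
        ≤ ∫ _ in (0:ℝ)..t / 2, Real.exp (-(c * t ^ p)) :=
      intervalIntegral.integral_mono_on ht2 (hfc 0 (t / 2) le_rfl ht2)
        (intervalIntegrable_const) hbound
    rw [intervalIntegral.integral_const, smul_eq_mul] at hmono
    have hkey := hC1t t ht
    -- (t/2) * exp(-c t^p) ≤ C1 * (1+t)^(-mu)
    have hE : (0:ℝ) < Real.exp (c * t ^ p) := Real.exp_pos _
    have hpow : (1 + t) ^ (mu + 1) * (1 + t) ^ (-mu) = 1 + t := by
      rw [← Real.rpow_add h1t, ← Real.rpow_one (1 + t)]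
      norm_num
    have hfinal : (t / 2 - 0) * Real.exp (-(c * t ^ p)) ≤ C1 * (1 + t) ^ (-mu) := by
      rw [Real.exp_neg, sub_zero, mul_inv_le_iff₀ hE]
      calc t / 2 ≤ 1 + t := by linarith
        _ = (1 + t) ^ (mu + 1) * (1 + t) ^ (-mu) := hpow.symm
        _ ≤ C1 * Real.exp (c * t ^ p) * (1 + t) ^ (-mu) :=
            mul_le_mul_of_nonneg_right hkey h1tm.le
        _ = C1 * (1 + t) ^ (-mu) * Real.exp (c * t ^ p) := by ring
    linarith
  -- ### Part 2 : the integral over [t/2, t]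
  set g : ℝ → ℝ := fun s => Real.exp (-lam * (t ^ p - s ^ p)) * (t ^ (1 - p) / (lam * p))
    with hg_def
  set g' : ℝ → ℝ := fun s => Real.exp (-lam * (t ^ p - s ^ p)) * s ^ (p - 1) * t ^ (1 - p)
    with hg'_def
  have hderiv : ∀ s ∈ Set.uIcc (t / 2) t, HasDerivAt g (g' s) s := by
    intro s hs
    rw [Set.uIcc_of_le ht2t] at hs
    have hs0 : 0 < s := lt_of_lt_of_le ht2pos hs.1
    have h1 : HasDerivAt (fun x : ℝ => x ^ p) (p * s ^ (p - 1)) s :=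
      Real.hasDerivAt_rpow_const (Or.inl hs0.ne')
    have h2 : HasDerivAt (fun x : ℝ => -lam * (t ^ p - x ^ p))
        (-lam * (0 - p * s ^ (p - 1))) s :=
      ((hasDerivAt_const s (t ^ p)).sub h1).const_mul (-lam)
    have h3 := (h2.exp).mul_const (t ^ (1 - p) / (lam * p))
    refine h3.congr_deriv ?_
    rw [hg'_def]
    field_simp
    ring
  have hg'cont : ContinuousOn g' (Set.uIcc (t / 2) t) := by
    rw [Set.uIcc_of_le ht2t]
    apply ContinuousOn.mul
    · apply ContinuousOn.mul hcont1.continuousOn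
      apply ContinuousOn.rpow_const continuousOn_id
      intro x hx
      exact Or.inl (lt_of_lt_of_le ht2pos hx.1).ne'
    · exact continuousOn_const
  have hg'int : IntervalIntegrable g' volume (t / 2) t :=
    hg'cont.intervalIntegrable
  have hftc : (∫ s in (t / 2)..t, g' s) = g t - g (t / 2) :=
    intervalIntegral.integral_eq_sub_of_hasDerivAt hderiv hg'int
  have part2 : (∫ s in (t / 2)..t, f s)
      ≤ 2 ^ mu * (1 + t) ^ (-mu) * ((1 + t) ^ (1 - p) / (lam * p)) := by
    have hbound : ∀ s ∈ Set.Icc (t / 2) t, f s ≤ 2 ^ mu * (1 + t) ^ (-mu) * g' s := by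
      intro s hs
      obtain ⟨hs1, hs2⟩ := hs
      have hs0 : 0 < s := lt_of_lt_of_le ht2pos hs1
      have hA : (1 + s) ^ (-mu) ≤ 2 ^ mu * (1 + t) ^ (-mu) := by
        have h1 : (1 + s) ^ (-mu) ≤ (1 + t / 2) ^ (-mu) :=
          Real.rpow_le_rpow_of_nonpos (by linarith) (by linarith) (by linarith)
        have h2 : (1 + t / 2) ^ (-mu) ≤ ((1 + t) / 2) ^ (-mu) :=
          Real.rpow_le_rpow_of_nonpos (by linarith) (by linarith) (by linarith)
        have h3 : ((1 + t) / 2) ^ (-mu) = (1 + t) ^ (-mu) * 2 ^ mu := by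
          rw [Real.div_rpow (by linarith) (by norm_num),
            Real.rpow_neg (by norm_num : (0:ℝ) ≤ 2), div_eq_mul_inv, inv_inv]
        calc (1 + s) ^ (-mu) ≤ ((1 + t) / 2) ^ (-mu) := le_trans h1 h2
          _ = 2 ^ mu * (1 + t) ^ (-mu) := by rw [h3]; ring
      have hB : (1:ℝ) ≤ s ^ (p - 1) * t ^ (1 - p) := by
        have h1 : t ^ (p - 1) ≤ s ^ (p - 1) :=
          Real.rpow_le_rpow_of_nonpos hs0 hs2 (by linarith)
        have h2 : t ^ (p - 1) * t ^ (1 - p) = 1 := by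
          rw [← Real.rpow_add ht0]; norm_num
        have h3 : (0:ℝ) < t ^ (1 - p) := Real.rpow_pos_of_pos ht0 _
        nlinarith
      have hEnn : (0:ℝ) ≤ Real.exp (-lam * (t ^ p - s ^ p)) := (Real.exp_pos _).le
      calc f s = Real.exp (-lam * (t ^ p - s ^ p)) * (1 + s) ^ (-mu) := rfl
        _ ≤ Real.exp (-lam * (t ^ p - s ^ p)) * (2 ^ mu * (1 + t) ^ (-mu)) :=
            mul_le_mul_of_nonneg_left hA hEnn
        _ ≤ Real.exp (-lam * (t ^ p - s ^ p)) * (2 ^ mu * (1 + t) ^ (-mu))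
            * (s ^ (p - 1) * t ^ (1 - p)) :=
            le_mul_of_one_le_right (by positivity) hB
        _ = 2 ^ mu * (1 + t) ^ (-mu) * g' s := by rw [hg'_def]; ring
    have hmono : (∫ s in (t / 2)..t, f s)
        ≤ ∫ s in (t / 2)..t, 2 ^ mu * (1 + t) ^ (-mu) * g' s :=
      intervalIntegral.integral_mono_on ht2t (hfc (t / 2) t ht2 ht2t)
        (hg'int.const_mul _) hbound
    rw [intervalIntegral.integral_const_mul, hftc] at hmono
    have hgt : g t - g (t / 2) ≤ t ^ (1 - p) / (lam * p) := by
      have h1 : g t = t ^ (1 - p) / (lam * p) := by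
        rw [hg_def]; simp
      have h2 : 0 ≤ g (t / 2) := by
        rw [hg_def]
        have : (0:ℝ) ≤ t ^ (1 - p) := Real.rpow_nonneg ht0.le _
        positivity
      linarith [h1.le]
    have hgt2 : t ^ (1 - p) / (lam * p) ≤ (1 + t) ^ (1 - p) / (lam * p) := by
      have hnum : t ^ (1 - p) ≤ (1 + t) ^ (1 - p) :=
        Real.rpow_le_rpow ht0.le (by linarith) (by linarith)
      exact (div_le_div_iff_of_pos_right (by positivity)).mpr hnum
    calc (∫ s in (t / 2)..t, f s)
        ≤ 2 ^ mu * (1 + t) ^ (-mu) * (g t - g (t / 2)) := hmono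
      _ ≤ 2 ^ mu * (1 + t) ^ (-mu) * ((1 + t) ^ (1 - p) / (lam * p)) := by
          apply mul_le_mul_of_nonneg_left _ (by positivity)
          exact le_trans hgt hgt2
  -- ### combine
  have hfinal := add_le_add part1 part2
  rw [← hsplit] at hfinal
  calc (∫ s in (0:ℝ)..t, f s)
      ≤ C1 * (1 + t) ^ (-mu) + 2 ^ mu * (1 + t) ^ (-mu) * ((1 + t) ^ (1 - p) / (lam * p)) :=
        hfinal
    _ ≤ C1 * ((1 + t) ^ (1 - p) * (1 + t) ^ (-mu))
        + 2 ^ mu / (lam * p) * ((1 + t) ^ (1 - p) * (1 + t) ^ (-mu)) := by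
        have e1 : C1 * (1 + t) ^ (-mu) ≤ C1 * ((1 + t) ^ (1 - p) * (1 + t) ^ (-mu)) :=
          mul_le_mul_of_nonneg_left (le_mul_of_one_le_left h1tm.le h1tp1) hC1.le
        have e2 : 2 ^ mu * (1 + t) ^ (-mu) * ((1 + t) ^ (1 - p) / (lam * p))
            = 2 ^ mu / (lam * p) * ((1 + t) ^ (1 - p) * (1 + t) ^ (-mu)) := by ring
        linarith [e2.le]
    _ = (C1 + 2 ^ mu / (lam * p)) * (1 + t) ^ (1 - p) * (1 + t) ^ (-mu) := by ring
end

section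
/- For 0 < p ≤ 1, λ > 0 and μ ≥ 0, there is a constant C (depending only on λ, μ, p) such that for all t ≥ 0, ∫₀ᵗ s^{p-1} e^{-λ(t^p - s^p)} (1+s)^{-μ} ds ≤ C (1+t)^{-μ}. -/
open Real MeasureTheory

private lemma exp_poly_bound {c : ℝ} (hc : 0 < c) (n : ℕ) {a x : ℝ} (ha : 0 ≤ a)
    (han : a ≤ (n : ℝ)) (hx : 0 ≤ x) :
    x ^ a * Real.exp (-(c * x)) ≤ 1 + n.factorial / c ^ n := by
  have hK : (0:ℝ) ≤ (n.factorial : ℝ) / c ^ n := by positivity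
  rcases le_total x 1 with h1 | h1
  · have hxa : x ^ a ≤ 1 := Real.rpow_le_one hx h1 ha
    have he : Real.exp (-(c * x)) ≤ 1 := Real.exp_le_one_iff.mpr (by nlinarith)
    nlinarith [Real.rpow_nonneg hx a, (Real.exp_pos (-(c * x))).le]
  · have hxa : x ^ a ≤ x ^ n := by
      have := Real.rpow_le_rpow_of_exponent_le h1 han
      rwa [Real.rpow_natCast] at this
    have hsum : (c * x) ^ n / (n.factorial : ℝ) ≤ Real.exp (c * x) := by
      calc (c * x) ^ n / (n.factorial : ℝ)
          ≤ ∑ i ∈ Finset.range (n + 1), (c * x) ^ i / (i.factorial : ℝ) := by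
            refine Finset.single_le_sum (f := fun i => (c * x) ^ i / (i.factorial : ℝ)) ?_
              (Finset.self_mem_range_succ n)
            intro i _
            have : 0 ≤ c * x := by nlinarith
            positivity
        _ ≤ Real.exp (c * x) := Real.sum_le_exp_of_nonneg (by nlinarith) _
    have h2 : c ^ n * x ^ n ≤ (n.factorial : ℝ) * Real.exp (c * x) := by
      have := (div_le_iff₀ (by positivity : (0:ℝ) < (n.factorial : ℝ))).mp hsum
      calc c ^ n * x ^ n = (c * x) ^ n := (mul_pow c x n).symm
        _ ≤ Real.exp (c * x) * (n.factorial : ℝ) := this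
        _ = (n.factorial : ℝ) * Real.exp (c * x) := mul_comm _ _
    have hmul : Real.exp (c * x) * Real.exp (-(c * x)) = 1 := by
      rw [← Real.exp_add]; simp
    have hxn : x ^ n * Real.exp (-(c * x)) ≤ (n.factorial : ℝ) / c ^ n := by
      rw [le_div_iff₀ (pow_pos hc n)]
      calc x ^ n * Real.exp (-(c * x)) * c ^ n
          = (c ^ n * x ^ n) * Real.exp (-(c * x)) := by ring
        _ ≤ ((n.factorial : ℝ) * Real.exp (c * x)) * Real.exp (-(c * x)) :=
            mul_le_mul_of_nonneg_right h2 (Real.exp_pos _).le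
        _ = (n.factorial : ℝ) := by rw [mul_assoc, hmul, mul_one]
    have : x ^ a * Real.exp (-(c * x)) ≤ x ^ n * Real.exp (-(c * x)) :=
      mul_le_mul_of_nonneg_right hxa (Real.exp_pos _).le
    linarith

theorem basic_decay_cor (p lam mu : ℝ) (hp : 0 < p) (hp1 : p ≤ 1) (hlam : 0 < lam)
    (hmu : 0 ≤ mu) :
    ∃ C : ℝ, 0 < C ∧ ∀ t : ℝ, 0 ≤ t →
      (∫ s in (0:ℝ)..t, s ^ (p - 1) * Real.exp (-lam * (t ^ p - s ^ p)) * (1 + s) ^ (-mu))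
        ≤ C * (1 + t) ^ (-mu) := by
  have h2p : (2:ℝ) ^ (-p) < 1 := Real.rpow_lt_one_of_one_lt_of_neg (by norm_num) (by linarith)
  have h2ppos : (0:ℝ) < (2:ℝ) ^ (-p) := Real.rpow_pos_of_pos (by norm_num) _
  set c : ℝ := lam * (1 - (2:ℝ) ^ (-p)) with hc_def
  have hc : 0 < c := by
    apply mul_pos hlam; linarith
  set n : ℕ := ⌈1 + mu / p⌉₊ with hn_def
  set K : ℝ := 1 + (n.factorial : ℝ) / c ^ n with hK_def
  have hK : 0 < K := by positivity
  have h2mu : (0:ℝ) < (2:ℝ) ^ mu := Real.rpow_pos_of_pos (by norm_num) _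
  refine ⟨(2:ℝ) ^ mu * (2 * K / p + 1 / (lam * p)), by positivity, ?_⟩
  intro t ht
  have hcont_rpow : Continuous fun s : ℝ => s ^ p := by
    rw [continuous_iff_continuousAt]
    intro x
    exact Real.continuousAt_rpow_const x p (Or.inr hp.le)
  have hcont_exp : Continuous fun s : ℝ => Real.exp (-lam * (t ^ p - s ^ p)) :=
    Real.continuous_exp.comp (continuous_const.mul (continuous_const.sub hcont_rpow))
  have huIcc : Set.uIcc (0:ℝ) t = Set.Icc 0 t := Set.uIcc_of_le ht
  have hcont_mu : ContinuousOn (fun s : ℝ => (1 + s) ^ (-mu)) (Set.uIcc 0 t) := by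
    rw [huIcc]
    intro s hs
    have h1s : (0:ℝ) < 1 + s := by have := hs.1; linarith
    exact ((Real.continuousAt_rpow_const (1 + s) (-mu) (Or.inl h1s.ne')).comp
      ((continuous_const.add continuous_id).continuousAt)).continuousWithinAt
  have hint1 : IntervalIntegrable (fun s : ℝ => s ^ (p - 1)) volume 0 t :=
    intervalIntegral.intervalIntegrable_rpow' (by linarith)
  have hint2 : IntervalIntegrable
      (fun s : ℝ => s ^ (p - 1) * Real.exp (-lam * (t ^ p - s ^ p))) volume 0 t :=
    hint1.mul_continuousOn hcont_exp.continuousOn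
  have hintf : IntervalIntegrable
      (fun s : ℝ => s ^ (p - 1) * Real.exp (-lam * (t ^ p - s ^ p)) * (1 + s) ^ (-mu))
      volume 0 t :=
    hint2.mul_continuousOn hcont_mu
  -- the majorant
  set A : ℝ := (2:ℝ) ^ mu * (1 + t) ^ (-mu) with hA_def
  have hApos : 0 < A := mul_pos h2mu (Real.rpow_pos_of_pos (by linarith) _)
  have hintg : IntervalIntegrable
      (fun s : ℝ => s ^ (p - 1) * Real.exp (-(c * t ^ p)) +
        A * (s ^ (p - 1) * Real.exp (-lam * (t ^ p - s ^ p)))) volume 0 t :=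
    (hint1.mul_const _).add (hint2.const_mul _)
  -- pointwise bound
  have hpt : ∀ s ∈ Set.Icc (0:ℝ) t,
      s ^ (p - 1) * Real.exp (-lam * (t ^ p - s ^ p)) * (1 + s) ^ (-mu) ≤
      s ^ (p - 1) * Real.exp (-(c * t ^ p)) +
        A * (s ^ (p - 1) * Real.exp (-lam * (t ^ p - s ^ p))) := by
    intro s hs
    obtain ⟨hs0, hst⟩ := hs
    have hsp : s ^ p ≤ t ^ p := Real.rpow_le_rpow hs0 hst hp.le
    have hspow : (0:ℝ) ≤ s ^ (p - 1) := Real.rpow_nonneg hs0 _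
    rcases le_total s (t / 2) with hhalf | hhalf
    · -- small s : exponential decay
      have htp : s ^ p ≤ (2:ℝ) ^ (-p) * t ^ p := by
        have h1 : s ^ p ≤ (t / 2) ^ p := Real.rpow_le_rpow hs0 hhalf hp.le
        have h2 : (t / 2) ^ p = t ^ p / (2:ℝ) ^ p := Real.div_rpow ht (by norm_num) p
        have h3 : (2:ℝ) ^ (-p) = ((2:ℝ) ^ p)⁻¹ := Real.rpow_neg (by norm_num) p
        rw [h2] at h1
        rw [h3]
        rw [div_eq_mul_inv, mul_comm] at h1
        exact h1
      have hexp : Real.exp (-lam * (t ^ p - s ^ p)) ≤ Real.exp (-(c * t ^ p)) := by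
        apply Real.exp_le_exp.mpr
        rw [hc_def]
        nlinarith
      have hrmu : (1 + s) ^ (-mu) ≤ 1 :=
        Real.rpow_le_one_of_one_le_of_nonpos (by linarith) (by linarith)
      have h1 : s ^ (p - 1) * Real.exp (-lam * (t ^ p - s ^ p)) * (1 + s) ^ (-mu) ≤
          s ^ (p - 1) * Real.exp (-(c * t ^ p)) := by
        calc s ^ (p - 1) * Real.exp (-lam * (t ^ p - s ^ p)) * (1 + s) ^ (-mu)
            ≤ s ^ (p - 1) * Real.exp (-lam * (t ^ p - s ^ p)) * 1 := by
              apply mul_le_mul_of_nonneg_left hrmu (by positivity)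
          _ = s ^ (p - 1) * Real.exp (-lam * (t ^ p - s ^ p)) := mul_one _
          _ ≤ s ^ (p - 1) * Real.exp (-(c * t ^ p)) :=
              mul_le_mul_of_nonneg_left hexp hspow
      have h2 : 0 ≤ A * (s ^ (p - 1) * Real.exp (-lam * (t ^ p - s ^ p))) := by positivity
      linarith
    · -- large s : polynomial decay
      have h1s : (1 + t) / 2 ≤ 1 + s := by linarith
      have hhp : (0:ℝ) < (1 + t) / 2 := by linarith
      have hrmu : (1 + s) ^ (-mu) ≤ A := by
        have h1 : (1 + s) ^ (-mu) ≤ ((1 + t) / 2) ^ (-mu) :=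
          Real.rpow_le_rpow_of_nonpos hhp h1s (by linarith)
        have h2 : ((1 + t) / 2) ^ (-mu) = A := by
          rw [hA_def, Real.div_rpow (by linarith) (by norm_num) (-mu),
            Real.rpow_neg (by norm_num : (0:ℝ) ≤ 2)]
          have h2mu' : ((2:ℝ) ^ mu) ≠ 0 := ne_of_gt h2mu
          field_simp
        rw [h2] at h1
        exact h1
      have h1 : s ^ (p - 1) * Real.exp (-lam * (t ^ p - s ^ p)) * (1 + s) ^ (-mu) ≤
          A * (s ^ (p - 1) * Real.exp (-lam * (t ^ p - s ^ p))) := by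
        rw [mul_comm A _]
        exact mul_le_mul_of_nonneg_left hrmu (by positivity)
      have h2 : 0 ≤ s ^ (p - 1) * Real.exp (-(c * t ^ p)) := by positivity
      linarith
  have hmono := intervalIntegral.integral_mono_on ht hintf hintg hpt
  -- compute / bound the majorant integral
  have hrpow_int : (∫ s in (0:ℝ)..t, s ^ (p - 1)) = t ^ p / p := by
    rw [integral_rpow (Or.inl (by linarith : (-1:ℝ) < p - 1))]
    rw [Real.zero_rpow (by linarith : p - 1 + 1 ≠ 0)]
    rw [sub_add_cancel]
    ring
  -- FTC for the weighted exponential integral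
  have hFTC : (∫ s in (0:ℝ)..t, s ^ (p - 1) * Real.exp (lam * s ^ p)) =
      (Real.exp (lam * t ^ p) - 1) / (lam * p) := by
    have hcontF : ContinuousOn (fun y : ℝ => Real.exp (lam * y ^ p) / (lam * p))
        (Set.Icc 0 t) :=
      ((Real.continuous_exp.comp (continuous_const.mul hcont_rpow)).div_const _).continuousOn
    have hderiv : ∀ x ∈ Set.Ioo (0:ℝ) t,
        HasDerivAt (fun y : ℝ => Real.exp (lam * y ^ p) / (lam * p))
          (x ^ (p - 1) * Real.exp (lam * x ^ p)) x := by
      intro x hx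
      have hx0 : x ≠ 0 := ne_of_gt hx.1
      have h1 : HasDerivAt (fun y : ℝ => y ^ p) (p * x ^ (p - 1)) x :=
        Real.hasDerivAt_rpow_const (Or.inl hx0)
      have h2 : HasDerivAt (fun y : ℝ => lam * y ^ p) (lam * (p * x ^ (p - 1))) x :=
        h1.const_mul lam
      have h3 : HasDerivAt (fun y : ℝ => Real.exp (lam * y ^ p))
          (Real.exp (lam * x ^ p) * (lam * (p * x ^ (p - 1)))) x := h2.exp
      have h4 := h3.div_const (lam * p)
      refine h4.congr_deriv ?_
      field_simp [hlam.ne', hp.ne']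
    have hintd : IntervalIntegrable (fun s : ℝ => s ^ (p - 1) * Real.exp (lam * s ^ p))
        volume 0 t :=
      hint1.mul_continuousOn
        (Real.continuous_exp.comp (continuous_const.mul hcont_rpow)).continuousOn
    rw [intervalIntegral.integral_eq_sub_of_hasDerivAt_of_le ht hcontF hderiv hintd]
    rw [Real.zero_rpow hp.ne', mul_zero, Real.exp_zero]
    ring
  have hJ : (∫ s in (0:ℝ)..t, s ^ (p - 1) * Real.exp (-lam * (t ^ p - s ^ p))) ≤
      1 / (lam * p) := by
    have heq : (∫ s in (0:ℝ)..t, s ^ (p - 1) * Real.exp (-lam * (t ^ p - s ^ p))) =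
        Real.exp (-(lam * t ^ p)) * ∫ s in (0:ℝ)..t, s ^ (p - 1) * Real.exp (lam * s ^ p) := by
      rw [← intervalIntegral.integral_const_mul]
      refine intervalIntegral.integral_congr fun s _ => ?_
      show s ^ (p - 1) * Real.exp (-lam * (t ^ p - s ^ p)) =
        Real.exp (-(lam * t ^ p)) * (s ^ (p - 1) * Real.exp (lam * s ^ p))
      rw [show -lam * (t ^ p - s ^ p) = -(lam * t ^ p) + lam * s ^ p by ring, Real.exp_add]
      ring
    rw [heq, hFTC]
    have he1 : Real.exp (-(lam * t ^ p)) * Real.exp (lam * t ^ p) = 1 := by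
      rw [← Real.exp_add]; simp
    have he2 : 0 < Real.exp (-(lam * t ^ p)) := Real.exp_pos _
    have hlp : (0:ℝ) < lam * p := mul_pos hlam hp
    calc Real.exp (-(lam * t ^ p)) * ((Real.exp (lam * t ^ p) - 1) / (lam * p))
        = (Real.exp (-(lam * t ^ p)) * (Real.exp (lam * t ^ p) - 1)) / (lam * p) := by ring
      _ ≤ 1 / (lam * p) := by
          rw [div_le_div_iff₀ hlp hlp]
          nlinarith
  -- bound on the first (exponentially small) term
  have hfirst : Real.exp (-(c * t ^ p)) * (t ^ p / p) ≤
      (2:ℝ) ^ mu * (2 * K) * (1 + t) ^ (-mu) / p := by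
    have key : t ^ p * Real.exp (-(c * t ^ p)) * (1 + t) ^ mu ≤ (2:ℝ) ^ mu * (2 * K) := by
      set x : ℝ := t ^ p with hx_def
      have hx0 : 0 ≤ x := Real.rpow_nonneg ht _
      -- (1+t)^mu ≤ 2^mu * (1 + t^mu)
      have hbase : (1 + t) ^ mu ≤ (2:ℝ) ^ mu * (1 + t ^ mu) := by
        have hmax : (1 + t) ≤ 2 * max 1 t := by
          rcases le_total t 1 with h | h
          · simp [max_eq_left h]; linarith
          · simp [max_eq_right h]; linarith
        have h1 : (1 + t) ^ mu ≤ (2 * max 1 t) ^ mu :=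
          Real.rpow_le_rpow (by linarith) hmax hmu
        have h2 : (2 * max 1 t) ^ mu = (2:ℝ) ^ mu * (max 1 t) ^ mu :=
          Real.mul_rpow (by norm_num) (le_max_of_le_left zero_le_one)
        have h3 : (max 1 t) ^ mu ≤ 1 + t ^ mu := by
          rcases le_total t 1 with h | h
          · rw [max_eq_left h, Real.one_rpow]
            have : 0 ≤ t ^ mu := Real.rpow_nonneg ht _
            linarith
          · rw [max_eq_right h]
            linarith
        calc (1 + t) ^ mu ≤ (2 * max 1 t) ^ mu := h1
          _ = (2:ℝ) ^ mu * (max 1 t) ^ mu := h2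
          _ ≤ (2:ℝ) ^ mu * (1 + t ^ mu) :=
            mul_le_mul_of_nonneg_left h3 h2mu.le
      have hn1 : (1:ℝ) ≤ (n:ℝ) := by
        have h1 : (1:ℝ) ≤ 1 + mu / p := by
          have : 0 ≤ mu / p := div_nonneg hmu hp.le
          linarith
        calc (1:ℝ) ≤ 1 + mu / p := h1
          _ ≤ (n:ℝ) := Nat.le_ceil _
      have haux1 : x * Real.exp (-(c * x)) ≤ K := by
        have := exp_poly_bound hc n (le_of_lt one_pos) hn1 hx0
        rwa [Real.rpow_one] at this
      have haux2 : x ^ (1 + mu / p) * Real.exp (-(c * x)) ≤ K :=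
        exp_poly_bound hc n (by positivity) (Nat.le_ceil _) hx0
      have hxpm : x * t ^ mu = x ^ (1 + mu / p) := by
        rw [hx_def, ← Real.rpow_mul ht]
        rw [show p * (1 + mu / p) = p + mu by field_simp]
        rw [Real.rpow_add_of_nonneg ht hp.le hmu]
      have hEpos : (0:ℝ) < Real.exp (-(c * x)) := Real.exp_pos _
      have htmu : (0:ℝ) ≤ t ^ mu := Real.rpow_nonneg ht _
      calc t ^ p * Real.exp (-(c * t ^ p)) * (1 + t) ^ mu
          = x * Real.exp (-(c * x)) * (1 + t) ^ mu := rfl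
        _ ≤ x * Real.exp (-(c * x)) * ((2:ℝ) ^ mu * (1 + t ^ mu)) := by
            apply mul_le_mul_of_nonneg_left hbase (by positivity)
        _ = (2:ℝ) ^ mu * (x * Real.exp (-(c * x)) + (x * t ^ mu) * Real.exp (-(c * x))) := by
            ring
        _ = (2:ℝ) ^ mu * (x * Real.exp (-(c * x)) + x ^ (1 + mu / p) * Real.exp (-(c * x))) := by
            rw [hxpm]
        _ ≤ (2:ℝ) ^ mu * (K + K) := by
            exact mul_le_mul_of_nonneg_left (add_le_add haux1 haux2) h2mu.le
        _ = (2:ℝ) ^ mu * (2 * K) := by ring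
    -- now divide by (1+t)^mu and by p
    have h1t : (0:ℝ) < 1 + t := by linarith
    have hmul1 : (1 + t) ^ mu * (1 + t) ^ (-mu) = 1 := by
      rw [← Real.rpow_add h1t]; simp
    have hnn : (0:ℝ) ≤ (1 + t) ^ (-mu) := Real.rpow_nonneg h1t.le _
    have key2 : t ^ p * Real.exp (-(c * t ^ p)) ≤ (2:ℝ) ^ mu * (2 * K) * (1 + t) ^ (-mu) := by
      have := mul_le_mul_of_nonneg_right key hnn
      calc t ^ p * Real.exp (-(c * t ^ p))
          = t ^ p * Real.exp (-(c * t ^ p)) * ((1 + t) ^ mu * (1 + t) ^ (-mu)) := by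
            rw [hmul1, mul_one]
        _ = t ^ p * Real.exp (-(c * t ^ p)) * (1 + t) ^ mu * (1 + t) ^ (-mu) := by ring
        _ ≤ (2:ℝ) ^ mu * (2 * K) * (1 + t) ^ (-mu) := this
    calc Real.exp (-(c * t ^ p)) * (t ^ p / p)
        = (t ^ p * Real.exp (-(c * t ^ p))) / p := by ring
      _ ≤ (2:ℝ) ^ mu * (2 * K) * (1 + t) ^ (-mu) / p := by
          rw [div_le_div_iff₀ hp hp]
          nlinarith [mul_le_mul_of_nonneg_right key2 hp.le]
  -- put everything together
  have hsplit : (∫ s in (0:ℝ)..t, (s ^ (p - 1) * Real.exp (-(c * t ^ p)) +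
      A * (s ^ (p - 1) * Real.exp (-lam * (t ^ p - s ^ p))))) =
      Real.exp (-(c * t ^ p)) * (t ^ p / p) +
        A * ∫ s in (0:ℝ)..t, s ^ (p - 1) * Real.exp (-lam * (t ^ p - s ^ p)) := by
    rw [intervalIntegral.integral_add (hint1.mul_const _) (hint2.const_mul _),
      intervalIntegral.integral_mul_const, intervalIntegral.integral_const_mul, hrpow_int]
    ring
  have hnn2 : (0:ℝ) ≤ (1 + t) ^ (-mu) := Real.rpow_nonneg (by linarith) _
  calc (∫ s in (0:ℝ)..t, s ^ (p - 1) * Real.exp (-lam * (t ^ p - s ^ p)) * (1 + s) ^ (-mu))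
      ≤ (∫ s in (0:ℝ)..t, (s ^ (p - 1) * Real.exp (-(c * t ^ p)) +
          A * (s ^ (p - 1) * Real.exp (-lam * (t ^ p - s ^ p))))) := hmono
    _ = Real.exp (-(c * t ^ p)) * (t ^ p / p) +
        A * ∫ s in (0:ℝ)..t, s ^ (p - 1) * Real.exp (-lam * (t ^ p - s ^ p)) := hsplit
    _ ≤ (2:ℝ) ^ mu * (2 * K) * (1 + t) ^ (-mu) / p + A * (1 / (lam * p)) := by
        have hJ' := mul_le_mul_of_nonneg_left hJ hApos.le
        linarith
    _ = (2:ℝ) ^ mu * (2 * K / p + 1 / (lam * p)) * (1 + t) ^ (-mu) := by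
        rw [hA_def]; ring
end
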